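/- arXiv:2506.09509 — 4 statements merged into one kernel-verified Lean document; each statement's English description precedes it below -/
import Mathlib

section
/- Every integer n (positive, negative, or zero) has a unique representation as a finite sum n = Σ_{i≥0} a_i (-b)^i with digits a_i ∈ {0, 1, ..., b-1}, for any integer base b ≥ 2. -/
/-- The `i`-th digit of the base-`b` expansion of `n`. -/
def bDigit (b n i : ℕ) : ℕ := (Nat.digits b n).getD i 0

/-- One step of the base-`(-b)` digit extraction: remove the least digit and divide by `-b`. -/
def negaStep (b m : ℤ) : ℤ := (m - m % b) / (-b)

/-- The `i`-th digit of the base-`(-b)` expansion of the integer `m`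
(digits lie in `{0,...,b-1}` when `b ≥ 2`). -/
def negaDigit (b m : ℤ) (i : ℕ) : ℤ := ((negaStep b)^[i] m) % b

/-- Digitwise addition mod `b` of base-`(-b)` expansions, read off in powers of `+b`. -/
noncomputable def oplusNeg (b α β : ℤ) : ℤ :=
  ∑ᶠ i : ℕ, ((negaDigit b α i + negaDigit b β i) % b) * b ^ i

/-- Digitwise addition mod `b` of base-`b` expansions. -/
noncomputable def oplus (b α β : ℕ) : ℕ :=
  ∑ᶠ i : ℕ, ((bDigit b α i + bDigit b β i) % b) * b ^ i

/-- Digitwise subtraction mod `b` of base-`b` expansions. -/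
noncomputable def ominus (b α β : ℕ) : ℕ :=
  ∑ᶠ i : ℕ, ((((bDigit b α i : ℤ) - (bDigit b β i : ℤ)) % (b : ℤ)).toNat) * b ^ i

/-- Flattening: replace each nonzero base-`b` digit by `1`. -/
noncomputable def flat (b n : ℕ) : ℕ :=
  ∑ᶠ i : ℕ, min (bDigit b n i) 1 * b ^ i

/-- The carry sequence for multiplying `n` by `b+1` in base `b`. -/
def carrySeq (b n : ℕ) : ℕ → ℕ
  | 0 => 0
  | k + 1 => (bDigit b n k + carrySeq b n k) / b + bDigit b n k

open Finset

private lemma measure_dec (b n r q t : ℤ) (hb : 2 ≤ b) (hn0 : n ≠ 0)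
    (hr0 : 0 ≤ r) (hrb : r < b) (ht : t = b * q) (hn : n = r - t) :
    (3 * q - 1).natAbs < (3 * n - 1).natAbs := by
  rcases lt_trichotomy q 0 with hq | hq | hq
  · have h2 : t - q ≤ -(b - 1) := by
      nlinarith [mul_nonneg (by linarith : (0:ℤ) ≤ b - 1) (by linarith : (0:ℤ) ≤ -q - 1)]
    omega
  · subst hq; simp at ht; omega
  · have h1 : b - 1 ≤ t - q := by
      nlinarith [mul_nonneg (by linarith : (0:ℤ) ≤ b - 1) (by linarith : (0:ℤ) ≤ q - 1)]
    omega

private lemma shift_sum (b r : ℤ) (g : ℕ →₀ ℤ) :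
    ∑ i ∈ (Finsupp.single (0:ℕ) r + Finsupp.mapDomain Nat.succ g).support,
      (Finsupp.single (0:ℕ) r + Finsupp.mapDomain Nat.succ g) i * (-b) ^ i
      = r + (-b) * ∑ i ∈ g.support, g i * (-b) ^ i := by
  rw [show (∑ i ∈ (Finsupp.single (0:ℕ) r + Finsupp.mapDomain Nat.succ g).support,
      (Finsupp.single (0:ℕ) r + Finsupp.mapDomain Nat.succ g) i * (-b) ^ i)
      = (Finsupp.single (0:ℕ) r + Finsupp.mapDomain Nat.succ g).sum (fun i a => a * (-b) ^ i) from rfl]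
  rw [Finsupp.sum_add_index' (fun a => by ring) (fun a b1 b2 => by ring)]
  rw [Finsupp.sum_single_index (by ring)]
  rw [Finsupp.sum_mapDomain_index_inj Nat.succ_injective]
  rw [show (∑ i ∈ g.support, g i * (-b) ^ i) = g.sum (fun i a => a * (-b) ^ i) from rfl]
  rw [Finsupp.mul_sum, pow_zero, mul_one]
  congr 1
  apply Finsupp.sum_congr
  intro x _
  rw [Nat.succ_eq_add_one, pow_succ]
  ring

private lemma exi (b : ℤ) (hb : 2 ≤ b) :
    ∀ (k : ℕ) (n : ℤ), (3 * n - 1).natAbs ≤ k →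
      ∃ f : ℕ →₀ ℤ, (∀ i, 0 ≤ f i ∧ f i < b) ∧ n = ∑ i ∈ f.support, f i * (-b) ^ i := by
  intro k
  induction k with
  | zero => intro n hn; exfalso; omega
  | succ k ih =>
    intro n hn
    by_cases hn0 : n = 0
    · refine ⟨0, fun i => by simp; omega, by simp [hn0]⟩
    · have hbne : b ≠ 0 := by omega
      have hr0 : 0 ≤ n % b := Int.emod_nonneg n hbne
      have hrb : n % b < b := Int.emod_lt_of_pos n (by omega)
      have heq : n = n % b + (-b) * (-(n / b)) := by
        have h := Int.mul_ediv_add_emod n b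
        linarith
      have hdec : (3 * (-(n / b)) - 1).natAbs ≤ k := by
        have := measure_dec b n (n % b) (-(n / b)) (b * (-(n / b))) hb hn0 hr0 hrb rfl
          (by linarith)
        omega
      obtain ⟨g, hg1, hg2⟩ := ih (-(n / b)) hdec
      refine ⟨Finsupp.single 0 (n % b) + Finsupp.mapDomain Nat.succ g, fun i => ?_, ?_⟩
      · cases i with
        | zero =>
          have h0 : (Finsupp.mapDomain Nat.succ g) 0 = 0 :=
            Finsupp.mapDomain_notin_range _ _ (by simp [Set.range, Nat.succ_ne_zero])
          rw [Finsupp.add_apply, h0, Finsupp.single_eq_same]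
          constructor <;> omega
        | succ i =>
          have h1 : (Finsupp.single 0 (n % b) : ℕ →₀ ℤ) (i + 1) = 0 :=
            Finsupp.single_eq_of_ne' (by omega)
          have h2 : (Finsupp.mapDomain Nat.succ g) (i + 1) = g i :=
            Finsupp.mapDomain_apply Nat.succ_injective g i
          rw [Finsupp.add_apply, h1, h2, zero_add]
          exact hg1 i
      · rw [shift_sum, ← hg2]; exact heq

private lemma key (b : ℤ) (hb : 2 ≤ b) :
    ∀ (N : ℕ) (u v : ℕ → ℤ), (∀ i, 0 ≤ u i ∧ u i < b) → (∀ i, 0 ≤ v i ∧ v i < b) →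
      (∑ i ∈ range N, u i * (-b) ^ i) = (∑ i ∈ range N, v i * (-b) ^ i) →
      ∀ i < N, u i = v i := by
  intro N
  induction N with
  | zero => intro u v _ _ _ i hi; omega
  | succ N ih =>
    intro u v hu hv hsum i hi
    rw [Finset.sum_range_succ', Finset.sum_range_succ'] at hsum
    have hA : ∀ w : ℕ → ℤ, ∑ i ∈ range N, w (i + 1) * (-b) ^ (i + 1)
        = (-b) * ∑ i ∈ range N, w (i + 1) * (-b) ^ i := by
      intro w
      rw [Finset.mul_sum]
      exact Finset.sum_congr rfl fun x _ => by rw [pow_succ]; ring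
    rw [hA u, hA v] at hsum
    simp only [pow_zero, mul_one] at hsum
    have hd : b ∣ (u 0 - v 0) := by
      refine ⟨(∑ i ∈ range N, u (i + 1) * (-b) ^ i) - ∑ i ∈ range N, v (i + 1) * (-b) ^ i, ?_⟩
      linear_combination hsum
    have hu0 := hu 0
    have hv0 := hv 0
    have h00 : u 0 = v 0 := by
      have := Int.eq_zero_of_abs_lt_dvd hd (abs_lt.mpr ⟨by omega, by omega⟩)
      omega
    have htail : (∑ i ∈ range N, u (i + 1) * (-b) ^ i) = ∑ i ∈ range N, v (i + 1) * (-b) ^ i := by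
      have hbne : (-b) ≠ 0 := by omega
      apply mul_left_cancel₀ hbne
      omega
    have := ih (fun i => u (i + 1)) (fun i => v (i + 1)) (fun i => hu (i + 1)) (fun i => hv (i + 1)) htail
    cases i with
    | zero => exact h00
    | succ i => exact this i (by omega)

/-- Every integer has a unique base-`(-b)` representation with digits in `{0,...,b-1}`. -/
theorem stmt0 (b : ℤ) (hb : 2 ≤ b) (n : ℤ) :
    ∃! f : ℕ →₀ ℤ, (∀ i, 0 ≤ f i ∧ f i < b) ∧
      n = ∑ i ∈ f.support, f i * (-b) ^ i := by
  obtain ⟨f, hf1, hf2⟩ := exi b hb (3 * n - 1).natAbs n le_rfl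
  refine ⟨f, ⟨hf1, hf2⟩, ?_⟩
  rintro g ⟨hg1, hg2⟩
  set N := ((f.support ∪ g.support).sup id) + 1 with hN
  have hfN : ∀ i ∈ f.support, i < N :=
    fun i hi => Nat.lt_succ_of_le (Finset.le_sup (f := id) (Finset.mem_union_left _ hi))
  have hgN : ∀ i ∈ g.support, i < N :=
    fun i hi => Nat.lt_succ_of_le (Finset.le_sup (f := id) (Finset.mem_union_right _ hi))
  have hfe : ∑ i ∈ f.support, f i * (-b) ^ i = ∑ i ∈ range N, f i * (-b) ^ i :=
    Finset.sum_subset (fun i hi => mem_range.mpr (hfN i hi))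
      (fun x _ hx => by rw [Finsupp.notMem_support_iff.mp hx]; ring)
  have hge : ∑ i ∈ g.support, g i * (-b) ^ i = ∑ i ∈ range N, g i * (-b) ^ i :=
    Finset.sum_subset (fun i hi => mem_range.mpr (hgN i hi))
      (fun x _ hx => by rw [Finsupp.notMem_support_iff.mp hx]; ring)
  have hsum : (∑ i ∈ range N, g i * (-b) ^ i) = ∑ i ∈ range N, f i * (-b) ^ i := by
    rw [← hfe, ← hge, ← hf2, ← hg2]
  have hkey := key b hb N g f hg1 hf1 hsum
  ext i
  by_cases hi : i < N
  · exact hkey i hi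
  · rw [Finsupp.notMem_support_iff.mp (fun h => hi (hgN i h)),
      Finsupp.notMem_support_iff.mp (fun h => hi (hfN i h))]
end

section
/- For every non-negative integer n and every base b ≥ 2, all digits of the base-b expansion of n ⊕_{-b} (-n) are either 0 or 1, where ⊕_{-b} is digitwise addition mod b of base-(-b) expansions. -/
/-! ### Auxiliary lemmas -/

lemma negaStep_eq' (B m : ℤ) (hB : 0 < B) : negaStep B m = -(m / B) := by
  have h : m - m % B = B * (m / B) := by rw [Int.emod_def]; ring
  rw [negaStep, h, Int.ediv_neg, Int.mul_ediv_cancel_left _ hB.ne']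

lemma negaStep_inv' (B : ℤ) (hB : 2 ≤ B) {u v : ℤ} (h : u + v = 0 ∨ u + v = 1) :
    negaStep B u + negaStep B v = 0 ∨ negaStep B u + negaStep B v = 1 := by
  have hB0 : 0 < B := by omega
  rw [negaStep_eq' B u hB0, negaStep_eq' B v hB0]
  have h1 : B * (u / B) + u % B = u := Int.mul_ediv_add_emod u B
  have h2 : B * (v / B) + v % B = v := Int.mul_ediv_add_emod v B
  have hu0 : 0 ≤ u % B := Int.emod_nonneg u hB0.ne'
  have hv0 : 0 ≤ v % B := Int.emod_nonneg v hB0.ne'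
  have hu1 : u % B < B := Int.emod_lt_of_pos u hB0
  have hv1 : v % B < B := Int.emod_lt_of_pos v hB0
  set q := u / B + v / B with hq
  have key : B * q = (u + v) - (u % B + v % B) := by rw [hq, mul_add]; linarith
  have hql : -(2 * B) < B * q := by rcases h with h | h <;> linarith
  have hqu : B * q ≤ 1 := by rcases h with h | h <;> linarith
  have q0 : q = 0 ∨ q = -1 := by
    rcases lt_trichotomy q 0 with h' | h' | h'
    · right
      by_contra hc
      have : q ≤ -2 := by omega
      nlinarith
    · left; exact h'
    · exfalso
      have : 1 ≤ q := h'
      nlinarith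
  rcases q0 with h' | h'
  · left; rw [hq] at h'; linarith
  · right; rw [hq] at h'; linarith

/-- measure for termination of `negaStep` iteration -/
def negaMeas (m : ℤ) : ℕ := (2 * m).toNat + (-2 * m + 1).toNat

lemma negaMeas_aux (B m q r : ℤ) (hB : 2 ≤ B) (hm : m ≠ 0) (h1 : B * q + r = m)
    (hr0 : 0 ≤ r) (hr1 : r < B) : negaMeas (-q) < negaMeas m := by
  rcases lt_trichotomy m 0 with h | h | h
  · have hq1 : q ≤ -1 := by nlinarith
    have hge : m ≤ q := by nlinarith
    simp only [negaMeas]; omega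
  · omega
  · have hq0 : 0 ≤ q := by nlinarith
    have hqm : 2 * q ≤ m := by nlinarith
    simp only [negaMeas]; omega

lemma negaMeas_dec (B : ℤ) (hB : 2 ≤ B) {m : ℤ} (hm : m ≠ 0) :
    negaMeas (negaStep B m) < negaMeas m := by
  have hB0 : 0 < B := by omega
  rw [negaStep_eq' B m hB0]
  exact negaMeas_aux B m (m / B) (m % B) hB hm (Int.mul_ediv_add_emod m B)
    (Int.emod_nonneg m hB0.ne') (Int.emod_lt_of_pos m hB0)

lemma negaStep_exists_iterate_zero (B : ℤ) (hB : 2 ≤ B) (m : ℤ) :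
    ∃ k, (negaStep B)^[k] m = 0 := by
  induction' hN : negaMeas m using Nat.strong_induction_on with N ih generalizing m
  by_cases hm : m = 0
  · exact ⟨0, hm⟩
  · obtain ⟨k, hk⟩ := ih (negaMeas (negaStep B m)) (hN ▸ negaMeas_dec B hB hm) _ rfl
    exact ⟨k + 1, by rwa [Function.iterate_succ_apply]⟩

lemma bDigit_eq_div_pow_mod (b : ℕ) (hb : 2 ≤ b) : ∀ (i N : ℕ), bDigit b N i = N / b ^ i % b := by
  intro i
  induction i with
  | zero =>
    intro N
    rcases Nat.eq_zero_or_pos N with h | h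
    · simp [bDigit, h]
    · rw [bDigit, Nat.digits_def' (by omega : 1 < b) h]
      simp
  | succ i ih =>
    intro N
    rcases Nat.eq_zero_or_pos N with h | h
    · simp [bDigit, h]
    · rw [bDigit, Nat.digits_def' (by omega : 1 < b) h]
      show (Nat.digits b (N / b)).getD i 0 = _
      rw [← bDigit, ih, Nat.div_div_eq_div_mul, ← pow_succ']

lemma sum_div_pow_mod' (b : ℕ) (hb : 2 ≤ b) :
    ∀ (i M : ℕ) (ε : ℕ → ℕ), (∀ j, ε j < b) →
      (∑ j ∈ Finset.range M, ε j * b ^ j) / b ^ i % b = if i < M then ε i else 0 := by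
  intro i
  induction i with
  | zero =>
    intro M ε hε
    rcases M with _ | M'
    · simp
    · rw [Finset.sum_range_succ']
      have : (∑ j ∈ Finset.range M', ε (j + 1) * b ^ (j + 1)) + ε 0 * b ^ 0
          = b * (∑ j ∈ Finset.range M', ε (j + 1) * b ^ j) + ε 0 := by
        rw [Finset.mul_sum]
        congr 1
        · apply Finset.sum_congr rfl; intro j _; ring
        · simp
      rw [this]
      simp [pow_zero, Nat.mul_add_mod, Nat.mod_eq_of_lt (hε 0)]
  | succ i ih =>
    intro M ε hε
    rcases M with _ | M'
    · simp
    · rw [Finset.sum_range_succ']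
      have : (∑ j ∈ Finset.range M', ε (j + 1) * b ^ (j + 1)) + ε 0 * b ^ 0
          = b * (∑ j ∈ Finset.range M', ε (j + 1) * b ^ j) + ε 0 := by
        rw [Finset.mul_sum]
        congr 1
        · apply Finset.sum_congr rfl; intro j _; ring
        · simp
      rw [this]
      have hdiv : (b * (∑ j ∈ Finset.range M', ε (j + 1) * b ^ j) + ε 0) / b ^ (i + 1)
          = (∑ j ∈ Finset.range M', ε (j + 1) * b ^ j) / b ^ i := by
        rw [pow_succ', ← Nat.div_div_eq_div_mul, Nat.mul_add_div (by omega),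
          Nat.div_eq_of_lt (hε 0), add_zero]
      rw [hdiv, ih M' (fun j => ε (j + 1)) (fun j => hε (j + 1))]
      simp [Nat.succ_lt_succ_iff]

theorem stmt1 (b : ℕ) (hb : 2 ≤ b) (n : ℕ) (i : ℕ) :
    bDigit b (oplusNeg (b : ℤ) (n : ℤ) (-(n : ℤ))).toNat i ≤ 1 := by
  have hB : (2 : ℤ) ≤ (b : ℤ) := by exact_mod_cast hb
  have hB0 : (0 : ℤ) < (b : ℤ) := by omega
  set B := (b : ℤ) with hBdef
  -- the invariant: the iterates of `n` and `-n` always sum to `0` or `1`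
  have inv : ∀ i, (negaStep B)^[i] (n : ℤ) + (negaStep B)^[i] (-(n : ℤ)) = 0 ∨
      (negaStep B)^[i] (n : ℤ) + (negaStep B)^[i] (-(n : ℤ)) = 1 := by
    intro i
    induction i with
    | zero => left; simp
    | succ i ih =>
      rw [Function.iterate_succ_apply', Function.iterate_succ_apply']
      exact negaStep_inv' B hB ih
  -- eventual vanishing of the iterates
  obtain ⟨k1, hk1⟩ := negaStep_exists_iterate_zero B hB (n : ℤ)
  obtain ⟨k2, hk2⟩ := negaStep_exists_iterate_zero B hB (-(n : ℤ))
  have hfix : negaStep B 0 = 0 := by simp [negaStep]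
  have hu : ∀ i, k1 ≤ i → (negaStep B)^[i] (n : ℤ) = 0 := by
    intro i hi
    rw [← Nat.sub_add_cancel hi, Function.iterate_add_apply, hk1,
      Function.iterate_fixed hfix]
  have hv : ∀ i, k2 ≤ i → (negaStep B)^[i] (-(n : ℤ)) = 0 := by
    intro i hi
    rw [← Nat.sub_add_cancel hi, Function.iterate_add_apply, hk2,
      Function.iterate_fixed hfix]
  set M := max k1 k2 with hM
  -- digit sums mod b equal the iterate sums
  have hdig : ∀ i, (negaDigit B (n : ℤ) i + negaDigit B (-(n : ℤ)) i) % B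
      = (negaStep B)^[i] (n : ℤ) + (negaStep B)^[i] (-(n : ℤ)) := by
    intro i
    have h1 : negaDigit B (n : ℤ) i = (negaStep B)^[i] (n : ℤ) % B := rfl
    have h2 : negaDigit B (-(n : ℤ)) i = (negaStep B)^[i] (-(n : ℤ)) % B := rfl
    rw [h1, h2, ← Int.add_emod]
    rcases inv i with h | h <;> rw [h]
    · exact Int.zero_emod B
    · exact Int.emod_eq_of_lt (by omega) (by omega)
  set g : ℕ → ℤ := fun i => ((negaDigit B (n : ℤ) i + negaDigit B (-(n : ℤ)) i) % B) * B ^ i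
    with hg
  have hsupp : Function.support g ⊆ ↑(Finset.range M) := by
    intro j hj
    simp only [Finset.coe_range, Set.mem_Iio]
    by_contra hc
    push_neg at hc
    apply hj
    have h0 := hdig j
    rw [hu j (le_trans (le_max_left _ _) hc), hv j (le_trans (le_max_right _ _) hc),
      add_zero] at h0
    simp [hg, h0]
  have hsum : oplusNeg B (n : ℤ) (-(n : ℤ)) = ∑ j ∈ Finset.range M, g j := by
    rw [oplusNeg]
    exact finsum_eq_finset_sum_of_support_subset g hsupp
  set ε : ℕ → ℕ := fun j => ((negaStep B)^[j] (n : ℤ) + (negaStep B)^[j] (-(n : ℤ))).toNat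
    with hε
  have hε1 : ∀ j, ε j ≤ 1 := by
    intro j
    rcases inv j with h | h <;> simp [hε, h]
  have hcast : ∀ j, ((ε j : ℤ)) = (negaStep B)^[j] (n : ℤ) + (negaStep B)^[j] (-(n : ℤ)) := by
    intro j
    rcases inv j with h | h <;> simp [hε, h]
  have hsum2 : oplusNeg B (n : ℤ) (-(n : ℤ)) = ((∑ j ∈ Finset.range M, ε j * b ^ j : ℕ) : ℤ) := by
    rw [hsum]
    push_cast
    apply Finset.sum_congr rfl
    intro j _
    rw [hg]
    dsimp only
    rw [hdig j, ← hcast j]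
  rw [hsum2, Int.toNat_natCast]
  rw [bDigit_eq_div_pow_mod b hb, sum_div_pow_mod' b hb i M ε (fun j => lt_of_le_of_lt (hε1 j) (by omega))]
  split
  · exact hε1 i
  · omega
end

section
/- For every positive integer n, n ⊕ (3n) = n ⊕_{-2} (-n), where ⊕ is bitwise XOR of binary expansions and ⊕_{-2} is digitwise addition mod 2 of base-(-2) expansions, read off as a binary number. -/
lemma negaStep2_zero : negaStep 2 0 = 0 := by unfold negaStep; omega

lemma iter_zero (m : ℤ) : ∃ N, (negaStep 2)^[N] m = 0 := by
  obtain ⟨k, hk⟩ : ∃ k, m.natAbs ≤ k := ⟨m.natAbs, le_rfl⟩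
  induction k generalizing m with
  | zero =>
    have h0 : m = 0 := by omega
    exact ⟨0, by simp [h0]⟩
  | succ k ih =>
    by_cases h0 : m = 0
    · exact ⟨0, h0⟩
    by_cases hm : m = -1
    · subst hm
      exact ⟨2, by decide⟩
    have hle : (negaStep 2 m).natAbs ≤ k := by unfold negaStep; omega
    obtain ⟨N, hN⟩ := ih (negaStep 2 m) hle
    exact ⟨N + 1, by rwa [Function.iterate_succ_apply]⟩

lemma negaDigit_eventually (m : ℤ) : ∃ N, ∀ i, N ≤ i → negaDigit 2 m i = 0 := by
  obtain ⟨N, hN⟩ := iter_zero m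
  refine ⟨N, fun i hi => ?_⟩
  have h : (negaStep 2)^[i] m = 0 := by
    rw [show i = (i - N) + N by omega, Function.iterate_add_apply, hN]
    exact Function.iterate_fixed negaStep2_zero _
  simp [negaDigit, h]

lemma negaDigit_succ (a : ℤ) (i : ℕ) :
    negaDigit 2 a (i + 1) = negaDigit 2 (negaStep 2 a) i := by
  simp [negaDigit, Function.iterate_succ_apply]

noncomputable def S (a b : ℤ) : ℤ :=
  ∑ᶠ i : ℕ, ((negaDigit 2 a i + negaDigit 2 b i) % 2) * 2 ^ i

lemma S_comm (a b : ℤ) : S a b = S b a :=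
  finsum_congr fun i => by rw [add_comm]

lemma S_zero : S 0 0 = 0 := by
  have h : ∀ i, negaDigit 2 (0:ℤ) i = 0 := fun i => by
    simp [negaDigit, Function.iterate_fixed negaStep2_zero]
  simp [S, h]

lemma S_rec (a b : ℤ) :
    S a b = (a % 2 + b % 2) % 2 + 2 * S (negaStep 2 a) (negaStep 2 b) := by
  obtain ⟨Na, hNa⟩ := negaDigit_eventually a
  obtain ⟨Nb, hNb⟩ := negaDigit_eventually b
  set N := max Na Nb with hN
  have h1 : S a b = ∑ i ∈ Finset.range (N+1),
      ((negaDigit 2 a i + negaDigit 2 b i) % 2) * 2 ^ i := by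
    apply finsum_eq_sum_of_support_subset
    intro i hi
    simp only [Function.mem_support] at hi
    simp only [Finset.coe_range, Set.mem_Iio]
    by_contra hc
    push_neg at hc
    rw [hNa i (by omega), hNb i (by omega)] at hi
    simp at hi
  have h3 : S (negaStep 2 a) (negaStep 2 b) = ∑ i ∈ Finset.range N,
      ((negaDigit 2 (negaStep 2 a) i + negaDigit 2 (negaStep 2 b) i) % 2) * 2 ^ i := by
    apply finsum_eq_sum_of_support_subset
    intro i hi
    simp only [Function.mem_support] at hi
    simp only [Finset.coe_range, Set.mem_Iio]
    by_contra hc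
    push_neg at hc
    rw [← negaDigit_succ, ← negaDigit_succ, hNa (i+1) (by omega), hNb (i+1) (by omega)] at hi
    simp at hi
  rw [h1, Finset.sum_range_succ', h3, Finset.mul_sum, add_comm]
  congr 1
  · simp [negaDigit]
  · apply Finset.sum_congr rfl
    intro i _
    rw [← negaDigit_succ, ← negaDigit_succ]
    ring

lemma bDigit_zero' (n : ℕ) : bDigit 2 n 0 = n % 2 := by
  rcases Nat.eq_zero_or_pos n with rfl | h
  · simp [bDigit]
  · rw [bDigit, Nat.digits_def' (by norm_num : 1 < 2) h]
    simp

lemma bDigit_succ (n i : ℕ) : bDigit 2 n (i + 1) = bDigit 2 (n / 2) i := by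
  rcases Nat.eq_zero_or_pos n with rfl | h
  · simp [bDigit]
  · rw [bDigit, Nat.digits_def' (by norm_num : 1 < 2) h]
    simp [bDigit]

lemma bDigit_eventually (n i : ℕ) (h : (Nat.digits 2 n).length ≤ i) : bDigit 2 n i = 0 :=
  List.getD_eq_default _ _ h

lemma T_rec (a b : ℕ) :
    oplus 2 a b = (a % 2 + b % 2) % 2 + 2 * oplus 2 (a / 2) (b / 2) := by
  set N := max (Nat.digits 2 a).length (Nat.digits 2 b).length with hN
  have h1 : oplus 2 a b = ∑ i ∈ Finset.range (N+1),
      ((bDigit 2 a i + bDigit 2 b i) % 2) * 2 ^ i := by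
    apply finsum_eq_sum_of_support_subset
    intro i hi
    simp only [Function.mem_support] at hi
    simp only [Finset.coe_range, Set.mem_Iio]
    by_contra hc
    push_neg at hc
    rw [bDigit_eventually a i (by omega), bDigit_eventually b i (by omega)] at hi
    simp at hi
  have h3 : oplus 2 (a/2) (b/2) = ∑ i ∈ Finset.range N,
      ((bDigit 2 (a/2) i + bDigit 2 (b/2) i) % 2) * 2 ^ i := by
    apply finsum_eq_sum_of_support_subset
    intro i hi
    simp only [Function.mem_support] at hi
    simp only [Finset.coe_range, Set.mem_Iio]
    by_contra hc
    push_neg at hc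
    rw [← bDigit_succ, ← bDigit_succ, bDigit_eventually a (i+1) (by omega),
      bDigit_eventually b (i+1) (by omega)] at hi
    simp at hi
  rw [h1, Finset.sum_range_succ', h3, Finset.mul_sum, add_comm]
  congr 1
  · simp [bDigit_zero']
  · apply Finset.sum_congr rfl
    intro i _
    rw [← bDigit_succ, ← bDigit_succ]
    ring

lemma T_zero : oplus 2 0 0 = 0 := by
  simp [oplus, bDigit]

lemma S_step (a b a2 b2 : ℤ) (ha : negaStep 2 a = a2) (hb : negaStep 2 b = b2) :
    S a b = (a % 2 + b % 2) % 2 + 2 * S a2 b2 := by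
  rw [← ha, ← hb]; exact S_rec a b

lemma T_step (a b a2 b2 : ℕ) (ha : a / 2 = a2) (hb : b / 2 = b2) :
    oplus 2 a b = (a % 2 + b % 2) % 2 + 2 * oplus 2 a2 b2 := by
  rw [← ha, ← hb]; exact T_rec a b

lemma lemC (m : ℕ) : oplus 2 m (3 * m + 2) = oplus 2 (m + 1) (3 * m + 3) := by
  induction m using Nat.strong_induction_on with
  | _ m ih =>
    rcases Nat.even_or_odd m with ⟨j, hj⟩ | ⟨j, hj⟩
    · subst hj
      rw [T_step (j+j) (3*(j+j)+2) j (3*j+1) (by omega) (by omega),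
          T_step (j+j+1) (3*(j+j)+3) j (3*j+1) (by omega) (by omega)]
      omega
    · subst hj
      have hIH := ih j (by omega)
      rw [T_step (2*j+1) (3*(2*j+1)+2) j (3*j+2) (by omega) (by omega),
          T_step (2*j+1+1) (3*(2*j+1)+3) (j+1) (3*j+3) (by omega) (by omega)]
      omega

lemma key_s2 (n : ℕ) : ((oplus 2 n (3*n) : ℕ) : ℤ) = S (n:ℤ) (-(n:ℤ)) ∧
    ((oplus 2 n (3*n+1) : ℕ) : ℤ) = S (-(n:ℤ)) ((n:ℤ)+1) := by
  induction n using Nat.strong_induction_on with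
  | _ n ih =>
    have h1 : ((oplus 2 n (3*n) : ℕ) : ℤ) = S (n:ℤ) (-(n:ℤ)) := by
      rcases Nat.eq_zero_or_pos n with rfl | hn
      · simp [T_zero, S_zero]
      rcases Nat.even_or_odd n with ⟨m, hm⟩ | ⟨m, hm⟩
      · subst hm
        have hA := (ih m (by omega)).1
        rw [T_step (m+m) (3*(m+m)) m (3*m) (by omega) (by omega),
            S_step ((m+m:ℕ):ℤ) (-((m+m:ℕ):ℤ)) (-(m:ℤ)) ((m:ℤ))
              (by unfold negaStep; omega) (by unfold negaStep; omega),
            S_comm (-(m:ℤ)) ((m:ℤ)), ← hA]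
        push_cast
        omega
      · subst hm
        have hA := (ih m (by omega)).2
        rw [T_step (2*m+1) (3*(2*m+1)) m (3*m+1) (by omega) (by omega),
            S_step (((2*m+1:ℕ)):ℤ) (-((2*m+1:ℕ):ℤ)) (-(m:ℤ)) ((m:ℤ)+1)
              (by unfold negaStep; omega) (by unfold negaStep; omega),
            ← hA]
        push_cast
        omega
    refine ⟨h1, ?_⟩
    rcases Nat.eq_zero_or_pos n with rfl | hn
    · rw [T_step 0 (3*0+1) 0 0 (by omega) (by omega),
          S_step (-((0:ℕ):ℤ)) (((0:ℕ):ℤ)+1) 0 0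
            (by unfold negaStep; omega) (by unfold negaStep; omega),
          T_zero, S_zero]
      push_cast
    rcases Nat.even_or_odd n with ⟨m, hm⟩ | ⟨m, hm⟩
    · subst hm
      have hA := (ih m (by omega)).1
      rw [T_step (m+m) (3*(m+m)+1) m (3*m) (by omega) (by omega),
          S_step (-((m+m:ℕ):ℤ)) (((m+m:ℕ):ℤ)+1) ((m:ℤ)) (-(m:ℤ))
            (by unfold negaStep; omega) (by unfold negaStep; omega),
          ← hA]
      push_cast
      omega
    · subst hm
      have hA : ((oplus 2 (m+1) (3*m+3) : ℕ) : ℤ) = S ((m:ℤ)+1) (-((m:ℤ)+1)) := by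
        rcases Nat.lt_or_ge (m+1) (2*m+1) with h | h
        · have := (ih (m+1) h).1
          rw [show 3*(m+1) = 3*m+3 from by ring] at this
          push_cast at this
          convert this using 3 <;> push_cast <;> ring
        · have hm0 : m = 0 := by omega
          subst hm0
          have := h1
          norm_num at this ⊢
          convert this using 2 <;> norm_num
      have hC := lemC m
      rw [T_step (2*m+1) (3*(2*m+1)+1) m (3*m+2) (by omega) (by omega),
          S_step (-((2*m+1:ℕ):ℤ)) (((2*m+1:ℕ):ℤ)+1) ((m:ℤ)+1) (-((m:ℤ)+1))
            (by unfold negaStep; omega) (by unfold negaStep; omega),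
          ← hA, hC]
      push_cast
      omega

theorem stmt2 (n : ℕ) (hn : 0 < n) :
    (oplus 2 n (3 * n) : ℤ) = oplusNeg 2 (n : ℤ) (-(n : ℤ)) := by
  exact (key_s2 n).1
end

section
/- For b ≥ 2 and non-negative integer n with base-b digits a_0, a_1, ..., define the carry sequence c_0 = 0, c_{k+1} = ⌊(a_k + c_k)/b⌋ + a_k. Then the k-th base-b digit of ((b+1)n) ⊖_b n equals c_k mod b, where ⊖_b is digitwise subtraction mod b in base b. -/
lemma bDigit_eq (b n i : ℕ) (hb : 2 ≤ b) : bDigit b n i = n / b ^ i % b := by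
  induction i generalizing n with
  | zero =>
    rcases Nat.eq_zero_or_pos n with h | h
    · simp [bDigit, h]
    · simp [bDigit, Nat.digits_def' (by omega : 1 < b) h]
  | succ i ih =>
    rcases Nat.eq_zero_or_pos n with h | h
    · simp [bDigit, h]
    · have : bDigit b n (i + 1) = bDigit b (n / b) i := by
        simp [bDigit, Nat.digits_def' (by omega : 1 < b) h]
      rw [this, ih, pow_succ, Nat.div_div_eq_div_mul, mul_comm]

lemma bDigit_lt (b n i : ℕ) (hb : 2 ≤ b) : bDigit b n i < b := by
  rw [bDigit_eq b n i hb]; exact Nat.mod_lt _ (by omega)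

lemma bDigit_zero_of_ge (b n i : ℕ) (h : (Nat.digits b n).length ≤ i) :
    bDigit b n i = 0 := List.getD_eq_default _ _ h

lemma sum_digits (b : ℕ) (hb : 2 ≤ b) (f : ℕ → ℕ) (L : ℕ) (hf : ∀ i, f i < b)
    (h0 : ∀ i, L ≤ i → f i = 0) (k : ℕ) :
    (∑ i ∈ Finset.range L, f i * b ^ i) / b ^ k % b = f k := by
  induction k generalizing f L with
  | zero =>
    rcases L with _ | m
    · simpa using (h0 0 (by omega)).symm
    · rw [Finset.sum_range_succ']
      simp only [pow_zero, mul_one, pow_succ]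
      have : ∑ i ∈ Finset.range m, f (i + 1) * (b ^ i * b) =
          b * ∑ i ∈ Finset.range m, f (i + 1) * b ^ i := by
        rw [Finset.mul_sum]; exact Finset.sum_congr rfl fun i _ => by ring
      rw [this]
      simp [Nat.mul_add_mod, Nat.mod_eq_of_lt (hf 0)]
  | succ k ih =>
    rcases L with _ | m
    · rw [h0 (k+1) (by omega)]; simp
    · rw [Finset.sum_range_succ']
      have heq : (∑ i ∈ Finset.range m, f (i + 1) * b ^ (i + 1)) + f 0 * b ^ 0 =
          b * (∑ i ∈ Finset.range m, f (i + 1) * b ^ i) + f 0 := by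
        rw [Finset.mul_sum, pow_zero, mul_one]; congr 1; exact Finset.sum_congr rfl fun i _ => by ring
      rw [heq, pow_succ, mul_comm (b ^ k) b, ← Nat.div_div_eq_div_mul,
        Nat.mul_add_div (by omega), Nat.div_eq_of_lt (hf 0), add_zero]
      exact ih (fun i => f (i + 1)) m (fun i => hf _) (fun i hi => h0 _ (by omega))

lemma carrySeq_eq (b n : ℕ) (hb : 2 ≤ b) (k : ℕ) :
    carrySeq b n k = (b + 1) * (n % b ^ k) / b ^ k := by
  induction k with
  | zero => simp [carrySeq, Nat.mod_one]
  | succ k ih =>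
    have hbk : 0 < b ^ k := pow_pos (by omega : 0 < b) k
    set a := bDigit b n k with ha
    set r := n % b ^ k with hr
    have hmod : n % b ^ (k + 1) = r + a * b ^ k := by
      rw [ha, bDigit_eq b n k hb, hr, pow_succ]
      rw [Nat.mod_mul]; ring_nf
    set t := (b + 1) * r / b ^ k with ht
    set r' := (b + 1) * r % b ^ k with hr'
    have hdiv : (b + 1) * r = b ^ k * t + r' := by
      rw [ht, hr']; exact (Nat.div_add_mod _ _).symm
    have hr'lt : r' < b ^ k := Nat.mod_lt _ hbk
    rw [carrySeq, ih, hmod]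
    have key : (b + 1) * (r + a * b ^ k) = b ^ k * (t + a + a * b) + r' := by
      calc (b + 1) * (r + a * b ^ k) = (b + 1) * r + (a + a * b) * b ^ k := by ring
        _ = _ := by rw [hdiv]; ring
    rw [key, pow_succ, ← Nat.div_div_eq_div_mul, Nat.mul_add_div hbk,
      Nat.div_eq_of_lt hr'lt, add_zero,
      show t + a + a * b = (a + t) + b * a by ring,
      Nat.add_mul_div_left _ _ (by omega : 0 < b)]

lemma bDigit_mul (b n : ℕ) (hb : 2 ≤ b) (k : ℕ) :
    bDigit b ((b + 1) * n) k = (bDigit b n k + carrySeq b n k) % b := by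
  have hbk : 0 < b ^ k := pow_pos (by omega : 0 < b) k
  rw [bDigit_eq _ _ _ hb, bDigit_eq _ _ _ hb, carrySeq_eq _ _ hb]
  set q := n / b ^ k with hq
  set r := n % b ^ k with hr
  set t := (b + 1) * r / b ^ k with ht
  set r' := (b + 1) * r % b ^ k with hr'
  have hr'lt : r' < b ^ k := Nat.mod_lt _ hbk
  have hdiv : (b + 1) * r = b ^ k * t + r' := by
    rw [ht, hr']; exact (Nat.div_add_mod _ _).symm
  have hn : n = b ^ k * q + r := by rw [hq, hr]; exact (Nat.div_add_mod _ _).symm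
  have key : (b + 1) * n = b ^ k * ((b + 1) * q + t) + r' := by
    calc (b + 1) * n = (b + 1) * (b ^ k * q) + (b + 1) * r := by rw [hn]; ring
      _ = _ := by rw [hdiv]; ring
  rw [key, Nat.mul_add_div hbk, Nat.div_eq_of_lt hr'lt, add_zero,
    show (b + 1) * q + t = q + t + q * b by ring, Nat.add_mul_mod_self_right,
    Nat.mod_add_mod]

theorem stmt6 (b n : ℕ) (hb : 2 ≤ b) (k : ℕ) :
    bDigit b (ominus b ((b + 1) * n) n) k = carrySeq b n k % b := by
  have hbz : (0 : ℤ) < b := by exact_mod_cast (by omega : 0 < b)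
  set N := (b + 1) * n with hN
  set g : ℕ → ℕ := fun i =>
    ((((bDigit b N i : ℤ) - (bDigit b n i : ℤ)) % (b : ℤ)).toNat) with hg
  have hglt : ∀ i, g i < b := by
    intro i
    have h1 : (0 : ℤ) ≤ (((bDigit b N i : ℤ) - bDigit b n i) % b) :=
      Int.emod_nonneg _ (by omega)
    have h2 : (((bDigit b N i : ℤ) - bDigit b n i) % b) < b :=
      Int.emod_lt_of_pos _ hbz
    simp only [hg]
    omega
  set L := max (Nat.digits b N).length (Nat.digits b n).length with hL
  have hg0 : ∀ i, L ≤ i → g i = 0 := by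
    intro i hi
    simp only [hg]
    rw [bDigit_zero_of_ge b N i (le_trans (le_max_left _ _) hi),
      bDigit_zero_of_ge b n i (le_trans (le_max_right _ _) hi)]
    simp
  have hsum : ominus b N n = ∑ i ∈ Finset.range L, g i * b ^ i := by
    rw [ominus]
    apply finsum_eq_finset_sum_of_support_subset
    intro i hi
    simp only [Function.mem_support] at hi
    simp only [Finset.coe_range, Set.mem_Iio]
    by_contra h
    push_neg at h
    exact hi (by rw [show (((bDigit b N i : ℤ) - (bDigit b n i : ℤ)) % (b : ℤ)).toNat = g i from rfl, hg0 i h, zero_mul])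
  have hd : bDigit b (ominus b N n) k = g k := by
    rw [hsum, bDigit_eq _ _ _ hb]
    exact sum_digits b hb g L hglt hg0 k
  rw [hd]
  simp only [hg]
  rw [hN, bDigit_mul b n hb k]
  set a := bDigit b n k
  set c := carrySeq b n k
  have : ((((a + c) % b : ℕ) : ℤ) - (a : ℤ)) % (b : ℤ) = ((c % b : ℕ) : ℤ) := by
    push_cast
    rw [Int.sub_emod, Int.emod_emod_of_dvd _ dvd_rfl, ← Int.sub_emod,
      add_sub_cancel_left]
  rw [this, Int.toNat_natCast]
end
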